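/- Let κ ∈ (−∞, 1). For every t ∈ {0} ∪ [1, 2/(1 + max{κ,0})), there exists a unique s ∈ [1, 2/(1 + max{κ,0})) satisfying s·[(2−s)(2−κs) − 1]/(2 − s(1+κ)) + t/(2 − t(1+κ)) = 0, and this s satisfies s ≥ t. Consequently, the sequence (s_k)_{k≥−1} defined by s_{−1} = 0 and by letting s_{k+1} be this unique solution for t = s_k is uniquely defined, monotonically increasing, and converges to 2/(1 + max{κ,0}) as k → ∞. -/

import Mathlib

/-- A sequence `s : ℕ → ℝ` represents the dynamic stepsize schedule `(s_k(κ))_{k ≥ -1}`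
(with the index shifted by one, so `s 0 = s_{-1} = 0`): each next term lies in
`[1, 2/(1+[κ]₊))` and satisfies the defining recursion. -/
def IsDynamicStepsizeSeq (κ : ℝ) (s : ℕ → ℝ) : Prop :=
  s 0 = 0 ∧ ∀ k : ℕ,
    s (k + 1) ∈ Set.Ico (1 : ℝ) (2 / (1 + max κ 0)) ∧
    s (k + 1) * ((2 - s (k + 1)) * (2 - κ * s (k + 1)) - 1) / (2 - s (k + 1) * (1 + κ)) +
      s k / (2 - s k * (1 + κ)) = 0

open Set Filter Topology

private noncomputable def Bk (κ : ℝ) : ℝ := 2 / (1 + max κ 0)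
private noncomputable def Fk (κ x : ℝ) : ℝ := x * ((2 - x) * (2 - κ * x) - 1) / (2 - x * (1 + κ))
private noncomputable def Gk (κ x : ℝ) : ℝ := x / (2 - x * (1 + κ))

private lemma B_gt_one {κ : ℝ} (hκ : κ < 1) : 1 < Bk κ := by
  unfold Bk
  rcases le_or_gt κ 0 with h | h
  · rw [max_eq_right h]; norm_num
  · rw [max_eq_left h.le]
    rw [lt_div_iff₀ (by linarith)]; linarith

private lemma B_le_two {κ : ℝ} : Bk κ ≤ 2 := by
  unfold Bk
  rcases le_or_gt κ 0 with h | h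
  · rw [max_eq_right h]; norm_num
  · rw [max_eq_left h.le]
    rw [div_le_iff₀ (by linarith)]; nlinarith

private lemma denom_pos {κ x : ℝ} (h0 : 0 ≤ x) (hx : x < Bk κ) :
    0 < 2 - x * (1 + κ) := by
  unfold Bk at hx
  rcases le_or_gt κ 0 with h | h
  · rw [max_eq_right h] at hx
    norm_num at hx
    nlinarith [mul_nonneg h0 (neg_nonneg.mpr h)]
  · rw [max_eq_left h.le] at hx
    rw [lt_div_iff₀ (by linarith)] at hx
    linarith

private lemma kx_lt_one {κ x : ℝ} (hκ : κ < 1) (h0 : 0 ≤ x) (hx : x < Bk κ) :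
    κ * x < 1 := by
  unfold Bk at hx
  rcases le_or_gt κ 0 with h | h
  · nlinarith [mul_nonneg h0 (neg_nonneg.mpr h)]
  · rw [max_eq_left h.le, lt_div_iff₀ (by linarith)] at hx
    nlinarith

private lemma two_sub_kx_pos {κ x : ℝ} (hκ : κ < 1) (h0 : 0 ≤ x) (hx : x < Bk κ) :
    0 < 2 - κ * x := by
  have := kx_lt_one hκ h0 hx; linarith

private lemma hasDerivAt_Fk {κ x : ℝ} (hd : 2 - x * (1 + κ) ≠ 0) :
    HasDerivAt (Fk κ)
      (-2 * (x - 1) * (1 - κ * x) * (3 - (1 + κ) * x) / (2 - x * (1 + κ)) ^ 2) x := by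
  have h2 : HasDerivAt (fun y : ℝ => 2 - y) (-1) x := (hasDerivAt_id x).const_sub 2
  have h3 : HasDerivAt (fun y : ℝ => 2 - κ * y) (-κ) x := by
    simpa using ((hasDerivAt_id x).const_mul κ).const_sub 2
  have hN : HasDerivAt (fun y : ℝ => y * ((2 - y) * (2 - κ * y) - 1))
      (1 * ((2 - x) * (2 - κ * x) - 1) + x * ((-1) * (2 - κ * x) + (2 - x) * (-κ))) x :=
    (hasDerivAt_id x).mul ((h2.mul h3).sub_const 1)
  have hD : HasDerivAt (fun y : ℝ => 2 - y * (1 + κ)) (-(1 * (1 + κ))) x :=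
    ((hasDerivAt_id x).mul_const (1 + κ)).const_sub 2
  have : HasDerivAt (Fk κ)
      (((1 * ((2 - x) * (2 - κ * x) - 1) + x * (-1 * (2 - κ * x) + (2 - x) * -κ)) * (2 - x * (1 + κ)) -
        x * ((2 - x) * (2 - κ * x) - 1) * -(1 * (1 + κ))) / (2 - x * (1 + κ)) ^ 2) x :=
    hN.div hD hd
  convert this using 1
  ring

private lemma continuousAt_Fk {κ x : ℝ} (hd : 2 - x * (1 + κ) ≠ 0) :
    ContinuousAt (Fk κ) x :=
  (hasDerivAt_Fk hd).continuousAt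

private lemma continuousOn_Fk {κ : ℝ} (hκ : κ < 1) :
    ContinuousOn (Fk κ) (Ico 1 (Bk κ)) := fun x hx =>
  (continuousAt_Fk (ne_of_gt (denom_pos (by linarith [hx.1]) hx.2))).continuousWithinAt

private lemma strictAntiOn_Fk {κ : ℝ} (hκ : κ < 1) :
    StrictAntiOn (Fk κ) (Ico 1 (Bk κ)) := by
  apply strictAntiOn_of_deriv_neg (convex_Ico _ _) (continuousOn_Fk hκ)
  intro x hx
  rw [interior_Ico] at hx
  have h0 : (0:ℝ) ≤ x := by linarith [hx.1]
  have hd := denom_pos h0 hx.2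
  rw [(hasDerivAt_Fk hd.ne').deriv]
  have h1 : 0 < x - 1 := by linarith [hx.1]
  have h2 : 0 < 1 - κ * x := by linarith [kx_lt_one hκ h0 hx.2]
  have h3 : 0 < 3 - (1 + κ) * x := by
    have hx2 : x < 2 := lt_of_lt_of_le hx.2 B_le_two
    rcases le_or_gt κ 0 with h | h
    · nlinarith
    · nlinarith [lt_of_lt_of_le hx.2 B_le_two]
  have : 0 < 2 - x * (1 + κ) := hd
  apply div_neg_of_neg_of_pos
  · nlinarith [mul_pos (mul_pos h1 h2) h3]
  · positivity

private lemma Fk_one {κ : ℝ} (hκ : κ < 1) : Fk κ 1 = 1 := by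
  unfold Fk
  rw [div_eq_one_iff_eq (by intro h; nlinarith [h])]
  ring

private lemma Fk_add_Gk {κ x : ℝ} : Fk κ x + Gk κ x =
    x * (2 - x) * (2 - κ * x) / (2 - x * (1 + κ)) := by
  unfold Fk Gk
  rw [← add_div]
  ring_nf

private lemma Gk_nonneg {κ t : ℝ} (hκ : κ < 1) (ht : t = 0 ∨ t ∈ Ico 1 (Bk κ)) :
    0 ≤ Gk κ t := by
  rcases ht with rfl | ht
  · simp [Gk]
  · exact div_nonneg (by linarith [ht.1]) (denom_pos (by linarith [ht.1]) ht.2).le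

/-- Existence of a point where `Fk` drops below `-Gk κ t`. -/
private lemma exists_drop {κ t : ℝ} (hκ : κ < 1) (ht : t = 0 ∨ t ∈ Ico 1 (Bk κ)) :
    ∃ s₀ ∈ Ioo 1 (Bk κ), Fk κ s₀ < -Gk κ t := by
  rcases lt_or_ge κ 0 with hneg | hpos
  · -- κ < 0 : Bk κ = 2, use continuity at 2
    have hB : Bk κ = 2 := by unfold Bk; rw [max_eq_right hneg.le]; norm_num
    have hdne : 2 - 2 * (1 + κ) ≠ 0 := by intro h; nlinarith
    have hF2 : Fk κ 2 = 1 / κ := by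
      unfold Fk; rw [div_eq_div_iff hdne hneg.ne]; ring
    have hlt : Fk κ 2 < -Gk κ t := by
      rw [hF2]
      rcases ht with rfl | htm
      · have : 1 / κ < 0 := div_neg_of_pos_of_neg one_pos hneg
        simpa [Gk] using this
      · have ht1 : (1:ℝ) ≤ t := htm.1
        have ht2 : t < 2 := by rw [← hB]; exact htm.2
        have hd : 0 < 2 - t * (1 + κ) := denom_pos (by linarith) htm.2
        unfold Gk
        rw [div_lt_iff_of_neg hneg]
        have heq : -(t / (2 - t * (1 + κ))) * κ = (t * (-κ)) / (2 - t * (1 + κ)) := by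
          field_simp
        rw [heq, div_lt_one hd]
        nlinarith
    have hc : ContinuousAt (Fk κ) 2 := continuousAt_Fk hdne
    have hne : (𝓝[Ioo (1:ℝ) 2] (2:ℝ)).NeBot := by
      apply mem_closure_iff_nhdsWithin_neBot.mp
      rw [closure_Ioo (by norm_num : (1:ℝ) ≠ 2)]
      exact ⟨by norm_num, le_refl 2⟩
    have hev : ∀ᶠ x in 𝓝[Ioo (1:ℝ) 2] 2, Fk κ x < -Gk κ t :=
      hc.continuousWithinAt.eventually_lt_const hlt
    obtain ⟨x, hx1, hx2⟩ := (hev.and (eventually_mem_nhdsWithin)).exists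
    exact ⟨x, by rw [hB]; exact hx2, hx1⟩
  · -- 0 ≤ κ : Fk tends to -∞ at Bk κ
    set B := Bk κ with hBdef
    have hc1 : (0:ℝ) < 1 + κ := by linarith
    have hBval : B * (1 + κ) = 2 := by
      rw [hBdef]; unfold Bk; rw [max_eq_left hpos]
      field_simp
    have hB1 : 1 < B := B_gt_one hκ
    have hNB : B * ((2 - B) * (2 - κ * B) - 1) < 0 := by
      have h1 : (2 - B) * (2 - κ * B) - 1 = κ * B ^ 2 - 1 := by nlinarith [hBval]
      rw [h1]
      have h2 : κ * B ^ 2 < 1 := by nlinarith [sq_nonneg (1 - κ), sq_nonneg B]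
      nlinarith
    have hNt : Tendsto (fun x : ℝ => x * ((2 - x) * (2 - κ * x) - 1)) (𝓝[<] B)
        (𝓝 (B * ((2 - B) * (2 - κ * B) - 1))) :=
      (Continuous.tendsto (by fun_prop) B).mono_left nhdsWithin_le_nhds
    have hDt : Tendsto (fun x : ℝ => 2 - x * (1 + κ)) (𝓝[<] B) (𝓝[>] 0) := by
      apply tendsto_nhdsWithin_of_tendsto_nhds_of_eventually_within
      · have h := (Continuous.tendsto (show Continuous fun x : ℝ => 2 - x * (1 + κ) by fun_prop) B)
        have : 2 - B * (1 + κ) = 0 := by linarith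
        rw [this] at h
        exact h.mono_left nhdsWithin_le_nhds
      · filter_upwards [self_mem_nhdsWithin] with x hx
        have : x < B := hx
        simp only [mem_Ioi]
        nlinarith
    have hFt : Tendsto (Fk κ) (𝓝[<] B) atBot := by
      have h := Filter.Tendsto.neg_mul_atTop hNB hNt hDt.inv_tendsto_nhdsGT_zero
      have heq : Fk κ = fun x => (x * ((2 - x) * (2 - κ * x) - 1)) *
          ((fun x : ℝ => 2 - x * (1 + κ))⁻¹ x) := by
        funext x; simp [Fk, div_eq_mul_inv]
      rw [heq]
      exact h
    have hev := hFt.eventually (eventually_lt_atBot (-Gk κ t))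
    have hIoo : Ioo 1 B ∈ 𝓝[<] B := Ioo_mem_nhdsLT hB1
    obtain ⟨x, hx1, hx2⟩ := (hev.and (eventually_of_mem hIoo (fun x hx => hx))).exists
    exact ⟨x, hx2, hx1⟩

/-- The unique-solution core lemma. -/
private lemma key {κ t : ℝ} (hκ : κ < 1) (ht : t = 0 ∨ t ∈ Ico 1 (Bk κ)) :
    ∃! s : ℝ, s ∈ Ico 1 (Bk κ) ∧ Fk κ s + Gk κ t = 0 := by
  obtain ⟨s₀, hs₀, hFs₀⟩ := exists_drop hκ ht
  have hGt := Gk_nonneg hκ ht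
  have hsub : Icc (1:ℝ) s₀ ⊆ Ico 1 (Bk κ) := fun x hx => ⟨hx.1, lt_of_le_of_lt hx.2 hs₀.2⟩
  have hmem : -Gk κ t ∈ Icc (Fk κ s₀) (Fk κ 1) := by
    constructor
    · linarith
    · rw [Fk_one hκ]; linarith
  obtain ⟨s, hs, hFs⟩ := intermediate_value_Icc' hs₀.1.le ((continuousOn_Fk hκ).mono hsub) hmem
  refine ⟨s, ⟨hsub hs, by linarith [hFs]⟩, ?_⟩
  rintro y ⟨hy, hFy⟩
  exact (strictAntiOn_Fk hκ).injOn hy (hsub hs) (by linarith)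

/-- monotonicity: any solution s dominates t. -/
private lemma t_le_s {κ t s : ℝ} (hκ : κ < 1) (ht : t = 0 ∨ t ∈ Ico 1 (Bk κ))
    (hs : s ∈ Ico 1 (Bk κ)) (heq : Fk κ s + Gk κ t = 0) : t ≤ s := by
  rcases ht with rfl | ht
  · linarith [hs.1]
  · have h0 : (0:ℝ) ≤ t := by linarith [ht.1]
    have hFt : 0 ≤ Fk κ t + Gk κ t := by
      rw [Fk_add_Gk]
      have h1 : 0 < 2 - t := by linarith [lt_of_lt_of_le ht.2 B_le_two]
      have h2 := two_sub_kx_pos hκ h0 ht.2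
      have h3 := denom_pos h0 ht.2
      positivity
    by_contra h
    push_neg at h
    have := strictAntiOn_Fk hκ hs ht h
    linarith

private noncomputable def nextS (κ t : ℝ) : ℝ :=
  if h : κ < 1 ∧ (t = 0 ∨ t ∈ Ico 1 (Bk κ)) then (key h.1 h.2).exists.choose else 1

private noncomputable def seqS (κ : ℝ) : ℕ → ℝ
  | 0 => 0
  | n + 1 => nextS κ (seqS κ n)

private lemma nextS_spec {κ t : ℝ} (hκ : κ < 1) (ht : t = 0 ∨ t ∈ Ico 1 (Bk κ)) :
    nextS κ t ∈ Ico 1 (Bk κ) ∧ Fk κ (nextS κ t) + Gk κ t = 0 := by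
  unfold nextS
  rw [dif_pos ⟨hκ, ht⟩]
  exact (key hκ ht).exists.choose_spec

private lemma seqS_invariant {κ : ℝ} (hκ : κ < 1) :
    ∀ n, seqS κ n = 0 ∨ seqS κ n ∈ Ico 1 (Bk κ)
  | 0 => Or.inl rfl
  | n + 1 => Or.inr (nextS_spec hκ (seqS_invariant hκ n)).1

/-- **Properties of the dynamic stepsize sequence (Proposition 5 /
`prop:properties_variable_stepsizes_sequence`).** For `κ < 1`: for every
`t ∈ {0} ∪ [1, 2/(1+[κ]₊))` there is a unique `s ∈ [1, 2/(1+[κ]₊))` satisfying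
`s[(2−s)(2−κs)−1]/(2−s(1+κ)) + t/(2−t(1+κ)) = 0`, and it satisfies `s ≥ t`.
Consequently the sequence `(s_k)_{k≥−1}` with `s_{−1}=0` exists, is uniquely defined,
is monotonically increasing, and converges to `2/(1+[κ]₊)`. -/
theorem dynamic_stepsize_sequence_properties (κ : ℝ) (hκ : κ < 1) :
    (∀ t : ℝ, (t = 0 ∨ t ∈ Set.Ico (1 : ℝ) (2 / (1 + max κ 0))) →
      (∃! s : ℝ, s ∈ Set.Ico (1 : ℝ) (2 / (1 + max κ 0)) ∧
        s * ((2 - s) * (2 - κ * s) - 1) / (2 - s * (1 + κ)) +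
          t / (2 - t * (1 + κ)) = 0) ∧
      (∀ s : ℝ, s ∈ Set.Ico (1 : ℝ) (2 / (1 + max κ 0)) →
        s * ((2 - s) * (2 - κ * s) - 1) / (2 - s * (1 + κ)) +
          t / (2 - t * (1 + κ)) = 0 → t ≤ s)) ∧
    (∃ s : ℕ → ℝ, IsDynamicStepsizeSeq κ s) ∧
    (∀ s₁ s₂ : ℕ → ℝ, IsDynamicStepsizeSeq κ s₁ → IsDynamicStepsizeSeq κ s₂ → s₁ = s₂) ∧
    (∀ s : ℕ → ℝ, IsDynamicStepsizeSeq κ s →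
      Monotone s ∧ Filter.Tendsto s Filter.atTop (nhds (2 / (1 + max κ 0)))) := by
  have hinv : ∀ s : ℕ → ℝ, IsDynamicStepsizeSeq κ s →
      ∀ n, s n = 0 ∨ s n ∈ Ico 1 (Bk κ) := by
    intro s hs n
    cases n with
    | zero => exact Or.inl hs.1
    | succ m => exact Or.inr (hs.2 m).1
  refine ⟨?_, ?_, ?_, ?_⟩
  · intro t ht
    exact ⟨key hκ ht, fun s hsmem hseq => t_le_s hκ ht hsmem hseq⟩
  · exact ⟨seqS κ, rfl, fun k => nextS_spec hκ (seqS_invariant hκ k)⟩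
  · intro s₁ s₂ h₁ h₂
    funext n
    induction n with
    | zero => rw [h₁.1, h₂.1]
    | succ m ih =>
      have e₁ : Fk κ (s₁ (m + 1)) + Gk κ (s₁ m) = 0 := (h₁.2 m).2
      have e₂ : Fk κ (s₂ (m + 1)) + Gk κ (s₁ m) = 0 := by
        rw [ih]; exact (h₂.2 m).2
      exact (key hκ (hinv s₁ h₁ m)).unique ⟨(h₁.2 m).1, e₁⟩ ⟨(h₂.2 m).1, e₂⟩
  · intro s hs
    have hmono : Monotone s := by
      apply monotone_nat_of_le_succ
      intro n
      exact t_le_s hκ (hinv s hs n) (hs.2 n).1 (hs.2 n).2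
    refine ⟨hmono, ?_⟩
    have hbound : ∀ n, s n ≤ Bk κ := by
      intro n
      cases n with
      | zero => rw [hs.1]; linarith [B_gt_one hκ]
      | succ m => exact (hs.2 m).1.2.le
    have hbdd : BddAbove (Set.range s) := ⟨Bk κ, by rintro y ⟨n, rfl⟩; exact hbound n⟩
    set L := ⨆ n, s n with hLdef
    have htend : Filter.Tendsto s Filter.atTop (𝓝 L) := tendsto_atTop_ciSup hmono hbdd
    have hL_le : L ≤ Bk κ := ciSup_le hbound
    have h1L : (1:ℝ) ≤ L := le_trans (hs.2 0).1.1 (le_ciSup hbdd 1)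
    have hLB : L = Bk κ := by
      by_contra hne
      have hLlt : L < Bk κ := lt_of_le_of_ne hL_le hne
      have hd : 0 < 2 - L * (1 + κ) := denom_pos (by linarith) hLlt
      have hFc : ContinuousAt (Fk κ) L := continuousAt_Fk hd.ne'
      have hGc : ContinuousAt (Gk κ) L := by
        unfold Gk
        exact ContinuousAt.div continuousAt_id (by fun_prop) hd.ne'
      have h1 : Filter.Tendsto (fun n => s (n + 1)) Filter.atTop (𝓝 L) :=
        htend.comp (tendsto_add_atTop_nat 1)
      have hFs : Filter.Tendsto (fun n => Fk κ (s (n + 1))) Filter.atTop (𝓝 (Fk κ L)) :=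
        hFc.tendsto.comp h1
      have hGs : Filter.Tendsto (fun n => Gk κ (s n)) Filter.atTop (𝓝 (Gk κ L)) :=
        hGc.tendsto.comp htend
      have hzero : ∀ n, Fk κ (s (n + 1)) + Gk κ (s n) = 0 := fun n => (hs.2 n).2
      have heq0 : Fk κ L + Gk κ L = 0 :=
        tendsto_nhds_unique ((hFs.add hGs).congr hzero) tendsto_const_nhds
      rw [Fk_add_Gk] at heq0
      have hnum : 0 < L * (2 - L) * (2 - κ * L) := by
        have h2 : 0 < 2 - L := by linarith [lt_of_lt_of_le hLlt B_le_two]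
        have h3 := two_sub_kx_pos hκ (by linarith : (0:ℝ) ≤ L) hLlt
        positivity
      rw [div_eq_zero_iff] at heq0
      rcases heq0 with h | h
      · linarith
      · linarith
    rw [show (2 / (1 + max κ 0) : ℝ) = Bk κ from rfl, ← hLB]
    exact htend
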